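/- arXiv:gr-qc/9711042 — 2 statements merged into one kernel-verified Lean document; each statement's English description precedes it below -/
import Mathlib

section
/- Let M be a smooth n-manifold, f : M → ℝ a smooth function, G a Riemannian metric on M, and ζ > 1 a real number. Define g_{μν} = (∂_ρ f ∂_σ f G^{ρσ}) G_{μν} − ζ ∂_μ f ∂_ν f. Then at every point p where df(p) ≠ 0, the bilinear form g is nondegenerate of Lorentzian signature (n−1, 1), and the vector field G^{μν}∂_ν f is timelike with respect to g at such points. -/
open Matrix

lemma vecMulVec_mulVec' {n : ℕ} (a b v : Fin n → ℝ) :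
    Matrix.vecMulVec a b *ᵥ v = (b ⬝ᵥ v) • a := by
  ext i
  simp [Matrix.vecMulVec, Matrix.mulVec, dotProduct, Finset.mul_sum,
    mul_comm, mul_assoc, mul_left_comm]

/-- At a point where `df ≠ 0`, the Morse metric
`g_{μν} = (∂_ρ f ∂_σ f G^{ρσ}) G_{μν} − ζ ∂_μ f ∂_ν f` (built from a Riemannian
metric `G`, represented pointwise by a positive-definite matrix, the differential
`df` of a smooth function, and a constant `ζ > 1`) is nondegenerate of Lorentzian
signature `(n−1, 1)`: it is invertible, positive definite on an `(n−1)`-dimensional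
subspace, and negative on some vector; moreover the vector `G^{μν}∂_ν f` is
timelike with respect to `g`. -/
theorem morse_metric_lorentzian
    (n : ℕ) (hn : 2 ≤ n)
    (G : Matrix (Fin n) (Fin n) ℝ) (hG : G.PosDef)
    (df : Fin n → ℝ) (hdf : df ≠ 0)
    (ζ : ℝ) (hζ : 1 < ζ)
    (g : Matrix (Fin n) (Fin n) ℝ)
    (hg : g = (df ⬝ᵥ (G⁻¹ *ᵥ df)) • G - ζ • Matrix.vecMulVec df df) :
    g.det ≠ 0 ∧
    (∃ W : Submodule ℝ (Fin n → ℝ), Module.finrank ℝ W = n - 1 ∧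
      ∀ v ∈ W, v ≠ 0 → 0 < v ⬝ᵥ (g *ᵥ v)) ∧
    (∃ v : Fin n → ℝ, v ⬝ᵥ (g *ᵥ v) < 0) ∧
    (G⁻¹ *ᵥ df) ⬝ᵥ (g *ᵥ (G⁻¹ *ᵥ df)) < 0 := by
  set c : ℝ := df ⬝ᵥ (G⁻¹ *ᵥ df) with hc_def
  have hGinv : (G⁻¹).PosDef := hG.inv
  have hc : 0 < c := by
    have := hGinv.dotProduct_mulVec_pos hdf
    simpa [hc_def] using this
  have hGdet : G.det ≠ 0 := ne_of_gt hG.det_pos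
  -- quadratic form formula
  have hq : ∀ v : Fin n → ℝ, v ⬝ᵥ (g *ᵥ v) = c * (v ⬝ᵥ (G *ᵥ v)) - ζ * (df ⬝ᵥ v) ^ 2 := by
    intro v
    rw [hg, Matrix.sub_mulVec, Matrix.smul_mulVec, Matrix.smul_mulVec,
      vecMulVec_mulVec', dotProduct_sub, dotProduct_smul, dotProduct_smul, dotProduct_smul]
    have : v ⬝ᵥ df = df ⬝ᵥ v := dotProduct_comm _ _
    simp only [smul_eq_mul, this]
    ring
  have hGG : G *ᵥ (G⁻¹ *ᵥ df) = df := by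
    rw [Matrix.mulVec_mulVec, Matrix.mul_nonsing_inv _ (isUnit_iff_ne_zero.mpr hGdet), Matrix.one_mulVec]
  have hdfGinv : df ⬝ᵥ (G⁻¹ *ᵥ df) = c := rfl
  have htime : (G⁻¹ *ᵥ df) ⬝ᵥ (g *ᵥ (G⁻¹ *ᵥ df)) < 0 := by
    rw [hq, hGG]
    have h1 : (G⁻¹ *ᵥ df) ⬝ᵥ df = c := by rw [dotProduct_comm]
    have h2 : df ⬝ᵥ (G⁻¹ *ᵥ df) = c := rfl
    rw [h1, h2]
    have h3 : c ^ 2 = c * c := sq c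
    nlinarith [mul_pos hc hc]
  refine ⟨?_, ?_, ⟨G⁻¹ *ᵥ df, htime⟩, htime⟩
  · -- det ≠ 0: kernel is trivial
    intro hdet
    obtain ⟨v, hv0, hvker⟩ := (Matrix.exists_mulVec_eq_zero_iff).mpr hdet
    -- g *ᵥ v = c • (G *ᵥ v) - (ζ * (df ⬝ᵥ v)) • df = 0
    have hkv : c • (G *ᵥ v) = (ζ * (df ⬝ᵥ v)) • df := by
      have := hvker
      rw [hg, Matrix.sub_mulVec, Matrix.smul_mulVec, Matrix.smul_mulVec,
        vecMulVec_mulVec', sub_eq_zero] at this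
      rw [this, smul_smul]
    by_cases hdv : df ⬝ᵥ v = 0
    · have : c • (G *ᵥ v) = 0 := by rw [hkv, hdv]; simp
      have hGv : G *ᵥ v = 0 := by
        rcases smul_eq_zero.mp this with h | h
        · exact absurd h (ne_of_gt hc)
        · exact h
      have := hG.dotProduct_mulVec_pos hv0
      rw [hGv] at this
      simp at this
    · -- v = (ζ (df⬝v)/c) • G⁻¹ df
      have hv : v = (ζ * (df ⬝ᵥ v) / c) • (G⁻¹ *ᵥ df) := by
        have h1 : G *ᵥ v = (ζ * (df ⬝ᵥ v) / c) • df := by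
          have := congrArg (fun w => c⁻¹ • w) hkv
          simp only [smul_smul, inv_mul_cancel₀ (ne_of_gt hc), one_smul] at this
          rw [this]
          ring_nf
        have := congrArg (fun w => G⁻¹ *ᵥ w) h1
        simp only [Matrix.mulVec_smul] at this
        rw [Matrix.mulVec_mulVec, Matrix.nonsing_inv_mul _ (isUnit_iff_ne_zero.mpr hGdet), Matrix.one_mulVec] at this
        exact this
      have hcontr : df ⬝ᵥ v = ζ * (df ⬝ᵥ v) := by
        conv_lhs => rw [hv]
        rw [dotProduct_smul, hdfGinv, smul_eq_mul]
        field_simp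
      have : (ζ - 1) * (df ⬝ᵥ v) = 0 := by linarith [hcontr]
      rcases mul_eq_zero.mp this with h | h
      · linarith
      · exact hdv h
  · -- positive subspace: kernel of df ⬝ᵥ ·
    let φ : (Fin n → ℝ) →ₗ[ℝ] ℝ :=
      { toFun := fun v => df ⬝ᵥ v
        map_add' := fun x y => dotProduct_add _ _ _
        map_smul' := fun r x => by simp [dotProduct_smul] }
    refine ⟨LinearMap.ker φ, ?_, ?_⟩
    · have hsurj : Function.Surjective φ := by
        obtain ⟨i, hi⟩ := Function.ne_iff.mp hdf
        intro r
        refine ⟨Pi.single i (r / df i), ?_⟩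
        simp only [φ, LinearMap.coe_mk, AddHom.coe_mk, dotProduct_single]
        have hi' : df i ≠ 0 := by simpa using hi
        field_simp
      have := LinearMap.finrank_range_add_finrank_ker φ
      rw [LinearMap.range_eq_top.mpr hsurj] at this
      simp only [finrank_top, Module.finrank_self, Module.finrank_pi,
        Fintype.card_fin] at this
      omega
    · intro v hv hv0
      have hdv : df ⬝ᵥ v = 0 := hv
      rw [hq, hdv]
      have hGv : 0 < v ⬝ᵥ (G *ᵥ v) := by
        have := hG.dotProduct_mulVec_pos hv0
        simpa using this
      nlinarith
end

section
/- For the Morse metric g constructed from (G, f, ζ) with ζ > 1, at any point where df ≠ 0 one has g^{ρσ} ∂_ρ f ∂_σ f = 1/(1 − ζ); in particular this quantity is negative, so df is timelike with respect to g. -/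
open Matrix

lemma vmv_mulVec (n : ℕ) (u v x : Fin n → ℝ) :
    Matrix.vecMulVec u v *ᵥ x = (v ⬝ᵥ x) • u := by
  ext i
  simp [Matrix.mulVec, Matrix.vecMulVec_apply, dotProduct, Finset.mul_sum, mul_comm, mul_left_comm]

lemma vmv_mul_mul_vmv (n : ℕ) (u : Fin n → ℝ) (M : Matrix (Fin n) (Fin n) ℝ) :
    Matrix.vecMulVec u u * M * Matrix.vecMulVec u u = (u ⬝ᵥ (M *ᵥ u)) • Matrix.vecMulVec u u := by
  ext i j
  simp [Matrix.mul_apply, Matrix.vecMulVec_apply, dotProduct, Matrix.mulVec,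
    Finset.mul_sum, Finset.sum_mul]
  rw [Finset.sum_comm]
  congr 1; ext k; congr 1; ext l; ring

/-- For the Morse metric `g` constructed from `(G, f, ζ)` with
`ζ > 1`, at any point where `df ≠ 0` one has
`g^{ρσ} ∂_ρ f ∂_σ f = 1/(1 − ζ)`; in particular this quantity is negative, so
`df` is timelike with respect to `g`. (`g⁻¹` is the inverse matrix of `g`.) -/
theorem morse_metric_df_timelike
    (n : ℕ)
    (G : Matrix (Fin n) (Fin n) ℝ) (hG : G.PosDef)
    (df : Fin n → ℝ) (hdf : df ≠ 0)
    (ζ : ℝ) (hζ : 1 < ζ)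
    (g : Matrix (Fin n) (Fin n) ℝ)
    (hg : g = (df ⬝ᵥ (G⁻¹ *ᵥ df)) • G - ζ • Matrix.vecMulVec df df) :
    df ⬝ᵥ (g⁻¹ *ᵥ df) = 1 / (1 - ζ) ∧ df ⬝ᵥ (g⁻¹ *ᵥ df) < 0 := by
  set c : ℝ := df ⬝ᵥ (G⁻¹ *ᵥ df) with hc
  have hcpos : 0 < c := by
    have := hG.inv.dotProduct_mulVec_pos hdf
    simpa [hc] using this
  have hc0 : c ≠ 0 := ne_of_gt hcpos
  have hζ0 : (1 : ℝ) - ζ ≠ 0 := by linarith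
  have hGG : G * G⁻¹ = 1 := Matrix.mul_nonsing_inv G (isUnit_iff_ne_zero.mpr hG.det_pos.ne')
  set V : Matrix (Fin n) (Fin n) ℝ := Matrix.vecMulVec df df with hV
  set b : ℝ := ζ / (c ^ 2 * (1 - ζ)) with hb
  set B : Matrix (Fin n) (Fin n) ℝ := c⁻¹ • G⁻¹ + b • (G⁻¹ * V * G⁻¹) with hB
  have hVMV : V * G⁻¹ * V = c • V := by
    rw [hV, vmv_mul_mul_vmv, ← hc]
  have hgB : g * B = 1 := by
    rw [hg, hB]
    have expand : (c • G - ζ • V) * (c⁻¹ • G⁻¹ + b • (G⁻¹ * V * G⁻¹))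
        = (c * c⁻¹) • (G * G⁻¹) + (c * b) • (G * (G⁻¹ * V * G⁻¹))
          - (ζ * c⁻¹) • (V * G⁻¹) - (ζ * b) • (V * (G⁻¹ * V * G⁻¹)) := by
      simp only [Matrix.sub_mul, Matrix.mul_add, Matrix.smul_mul, Matrix.mul_smul, smul_smul]
      module
    have h1 : G * (G⁻¹ * V * G⁻¹) = V * G⁻¹ := by
      rw [← Matrix.mul_assoc, ← Matrix.mul_assoc, hGG, Matrix.one_mul]
    have h2 : V * (G⁻¹ * V * G⁻¹) = c • (V * G⁻¹) := by
      rw [← Matrix.mul_assoc, ← Matrix.mul_assoc, Matrix.mul_assoc V G⁻¹ V, ← Matrix.mul_assoc,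
        hVMV, Matrix.smul_mul]
    rw [expand, mul_inv_cancel₀ hc0, h1, h2, hGG, smul_smul]
    have hcoef : (c * b) - ζ * c⁻¹ - ζ * b * c = 0 := by
      rw [hb]; field_simp; ring
    have : (c * b) • (V * G⁻¹) - (ζ * c⁻¹) • (V * G⁻¹) - (ζ * b * c) • (V * G⁻¹) = 0 := by
      rw [← sub_smul, ← sub_smul, hcoef, zero_smul]
    calc (1:ℝ) • (1 : Matrix (Fin n) (Fin n) ℝ) + (c * b) • (V * G⁻¹) - (ζ * c⁻¹) • (V * G⁻¹)
          - (ζ * b * c) • (V * G⁻¹)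
        = 1 + ((c * b) • (V * G⁻¹) - (ζ * c⁻¹) • (V * G⁻¹) - (ζ * b * c) • (V * G⁻¹)) := by
          rw [one_smul]; abel
      _ = 1 := by rw [this, add_zero]
  have hginv : g⁻¹ = B := Matrix.inv_eq_right_inv hgB
  have hval : df ⬝ᵥ (g⁻¹ *ᵥ df) = 1 / (1 - ζ) := by
    rw [hginv, hB]
    have hVdf : V *ᵥ (G⁻¹ *ᵥ df) = c • df := by
      rw [hV, vmv_mulVec, ← hc]
    rw [Matrix.add_mulVec, Matrix.smul_mulVec, Matrix.smul_mulVec,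
      dotProduct_add, dotProduct_smul, dotProduct_smul, ← Matrix.mulVec_mulVec,
      ← Matrix.mulVec_mulVec, hVdf, Matrix.mulVec_smul, dotProduct_smul, ← hc]
    rw [hb]
    field_simp
    simp only [smul_eq_mul]; field_simp; ring
  refine ⟨hval, ?_⟩
  rw [hval]
  apply div_neg_of_pos_of_neg one_pos
  linarith
end
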